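/- Let M ≥ 1, let a_1,...,a_M > 0 with a_max := max_m a_m, and let c = (c_1,...,c_M), z = (z_1,...,z_M) be probability vectors with all entries in (0,1). Then ∑_{m=1}^M (a_m c_m / a_max) * log( (c_m / ∑_{j} a_j c_j) / (z_m / ∑_j a_j z_j) ) ≤ ∑_{m=1}^M c_m * log(c_m / z_m). -/

import Mathlib

open Finset

/-- The log-sum inequality. -/
lemma log_sum_ineq {ι : Type*} (s : Finset ι) (b d : ι → ℝ)
    (hb : ∀ i ∈ s, 0 ≤ b i) (hd : ∀ i ∈ s, 0 ≤ d i)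
    (hbd : ∀ i ∈ s, b i ≠ 0 → 0 < d i) :
    (∑ i ∈ s, b i) * Real.log ((∑ i ∈ s, b i) / (∑ i ∈ s, d i)) ≤
      ∑ i ∈ s, b i * Real.log (b i / d i) := by
  set B := ∑ i ∈ s, b i with hB
  set D := ∑ i ∈ s, d i with hD
  rcases eq_or_lt_of_le (Finset.sum_nonneg hb) with h0 | hBpos
  · -- B = 0, so all b i = 0
    have hall : ∀ i ∈ s, b i = 0 :=
      (Finset.sum_eq_zero_iff_of_nonneg hb).mp h0.symm
    have h1 : ∑ i ∈ s, b i * Real.log (b i / d i) = 0 :=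
      Finset.sum_eq_zero fun i hi => by rw [hall i hi, zero_mul]
    have hB0 : B = 0 := h0.symm
    rw [h1, hB0, zero_mul]
  · -- B > 0, hence D > 0
    obtain ⟨i0, hi0, hbi0⟩ : ∃ i ∈ s, 0 < b i := by
      by_contra h
      push_neg at h
      have : B = 0 := Finset.sum_eq_zero fun i hi => le_antisymm (h i hi) (hb i hi)
      linarith
    have hDpos : 0 < D :=
      Finset.sum_pos' hd ⟨i0, hi0, hbd i0 hi0 hbi0.ne'⟩
    have perterm : ∀ i ∈ s, b i - d i * (B / D) ≤
        b i * Real.log (b i / d i) - b i * Real.log (B / D) := by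
      intro i hi
      rcases eq_or_lt_of_le (hb i hi) with hb0 | hbpos
      · rw [← hb0, zero_mul, zero_mul, zero_sub, sub_self, neg_nonpos]
        exact mul_nonneg (hd i hi) (div_nonneg hBpos.le hDpos.le)
      · have hdpos : 0 < d i := hbd i hi hbpos.ne'
        have hx : 0 < d i * B / (b i * D) := by positivity
        have hlog := Real.log_le_sub_one_of_pos hx
        have heq : Real.log (d i * B / (b i * D)) =
            Real.log (B / D) - Real.log (b i / d i) := by
          rw [Real.log_div (by positivity) (by positivity),
            Real.log_div hbpos.ne' hdpos.ne', Real.log_div hBpos.ne' hDpos.ne',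
            Real.log_mul hdpos.ne' hBpos.ne', Real.log_mul hbpos.ne' hDpos.ne']
          ring
        rw [heq] at hlog
        have h2 := mul_le_mul_of_nonneg_left hlog hbpos.le
        have hrw : b i * (d i * B / (b i * D) - 1) = d i * (B / D) - b i := by
          field_simp
        rw [hrw] at h2
        nlinarith
    have hsum := Finset.sum_le_sum perterm
    rw [Finset.sum_sub_distrib, Finset.sum_sub_distrib, ← Finset.sum_mul,
      ← Finset.sum_mul, ← hB, ← hD] at hsum
    have hDB : D * (B / D) = B := by field_simp
    linarith

set_option maxHeartbeats 1000000 in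
theorem tilted_kl_le_kl (M : ℕ) (hM : 1 ≤ M) (a c z : Fin M → ℝ) (amax : ℝ)
    (ha : ∀ m, 0 < a m)
    (hamax_ub : ∀ m, a m ≤ amax) (hamax_mem : ∃ m, a m = amax)
    (hc : ∀ m, c m ∈ Set.Ioo (0:ℝ) 1) (hz : ∀ m, z m ∈ Set.Ioo (0:ℝ) 1)
    (hc1 : ∑ m, c m = 1) (hz1 : ∑ m, z m = 1) :
    ∑ m, (a m * c m / amax) *
        Real.log ((c m / ∑ j, a j * c j) / (z m / ∑ j, a j * z j))
      ≤ ∑ m, c m * Real.log (c m / z m) := by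
  have hne : Nonempty (Fin M) := ⟨⟨0, hM⟩⟩
  obtain ⟨m0, hm0⟩ := hamax_mem
  have hamax : 0 < amax := hm0 ▸ ha m0
  set Sc := ∑ j, a j * c j with hSc
  set Sz := ∑ j, a j * z j with hSz
  have hScpos : 0 < Sc :=
    Finset.sum_pos (fun j _ => mul_pos (ha j) (hc j).1) Finset.univ_nonempty
  have hSzpos : 0 < Sz :=
    Finset.sum_pos (fun j _ => mul_pos (ha j) (hz j).1) Finset.univ_nonempty
  have hScle : Sc ≤ amax := by
    calc Sc ≤ ∑ j, amax * c j :=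
          Finset.sum_le_sum fun j _ =>
            mul_le_mul_of_nonneg_right (hamax_ub j) (hc j).1.le
      _ = amax := by rw [← Finset.mul_sum, hc1, mul_one]
  have hSzle : Sz ≤ amax := by
    calc Sz ≤ ∑ j, amax * z j :=
          Finset.sum_le_sum fun j _ =>
            mul_le_mul_of_nonneg_right (hamax_ub j) (hz j).1.le
      _ = amax := by rw [← Finset.mul_sum, hz1, mul_one]
  set L : Fin M → ℝ := fun m => Real.log (c m) - Real.log (z m) with hL
  -- rewrite LHS
  have hlog1 : ∀ m, Real.log ((c m / Sc) / (z m / Sz)) =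
      L m - Real.log Sc + Real.log Sz := by
    intro m
    rw [Real.log_div (div_pos (hc m).1 hScpos).ne' (div_pos (hz m).1 hSzpos).ne',
      Real.log_div (hc m).1.ne' hScpos.ne',
      Real.log_div (hz m).1.ne' hSzpos.ne']
    simp only [hL]
    ring
  have hlog2 : ∀ m, Real.log (c m / z m) = L m := fun m =>
    Real.log_div (hc m).1.ne' (hz m).1.ne'
  set b : Fin M → ℝ := fun m => a m * c m / amax with hb
  have hsb : ∑ m, b m = Sc / amax := by
    simp only [hb]
    rw [hSc, Finset.sum_div]
  have hLHS : ∑ m, (a m * c m / amax) *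
        Real.log ((c m / Sc) / (z m / Sz)) =
      ∑ m, b m * L m + (Sc / amax) * (Real.log Sz - Real.log Sc) := by
    have h1 : ∀ m : Fin M, (a m * c m / amax) * Real.log ((c m / Sc) / (z m / Sz))
        = b m * L m + b m * (Real.log Sz - Real.log Sc) := by
      intro m; rw [hlog1 m]; simp only [hb]; ring
    rw [Finset.sum_congr rfl fun m _ => h1 m, Finset.sum_add_distrib,
      ← Finset.sum_mul, hsb]
  have hRHS : ∑ m, c m * Real.log (c m / z m) = ∑ m, c m * L m :=
    Finset.sum_congr rfl fun m _ => by rw [hlog2 m]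
  rw [hLHS, hRHS]
  -- remainder weights
  set b' : Fin M → ℝ := fun m => c m - a m * c m / amax with hb'
  set d' : Fin M → ℝ := fun m => z m - a m * z m / amax with hd'
  have hsplit : ∑ m, c m * L m - ∑ m, b m * L m = ∑ m, b' m * L m := by
    rw [← Finset.sum_sub_distrib]
    exact Finset.sum_congr rfl fun m _ => by simp only [hb, hb']; ring
  have hb'nonneg : ∀ m, 0 ≤ b' m := by
    intro m
    simp only [hb']
    have h : a m * c m / amax ≤ c m := by
      rw [div_le_iff₀ hamax]
      nlinarith [mul_le_mul_of_nonneg_right (hamax_ub m) (hc m).1.le]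
    linarith
  have hd'nonneg : ∀ m, 0 ≤ d' m := by
    intro m
    simp only [hd']
    have h : a m * z m / amax ≤ z m := by
      rw [div_le_iff₀ hamax]
      nlinarith [mul_le_mul_of_nonneg_right (hamax_ub m) (hz m).1.le]
    linarith
  have hb'd' : ∀ m, b' m ≠ 0 → 0 < d' m := by
    intro m hm
    have hlt : a m < amax := by
      rcases eq_or_lt_of_le (hamax_ub m) with h | h
      · exfalso; apply hm; simp only [hb', h]; field_simp; ring
      · exact h
    simp only [hd']
    have h : a m * z m / amax < z m := by
      rw [div_lt_iff₀ hamax]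
      nlinarith [mul_lt_mul_of_pos_right hlt (hz m).1]
    linarith
  have hsum_b' : ∑ m, b' m = 1 - Sc / amax := by
    simp only [hb']
    rw [Finset.sum_sub_distrib, hc1, hSc, Finset.sum_div]
  have hsum_d' : ∑ m, d' m = 1 - Sz / amax := by
    simp only [hd']
    rw [Finset.sum_sub_distrib, hz1, hSz, Finset.sum_div]
  -- termwise, b' m * log (b' m / d' m) = b' m * L m
  have hterm : ∀ m, b' m * Real.log (b' m / d' m) = b' m * L m := by
    intro m
    rcases eq_or_lt_of_le (hb'nonneg m) with h0 | hpos
    · rw [← h0, zero_mul, zero_mul]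
    · have hdpos : 0 < d' m := hb'd' m hpos.ne'
      congr 1
      have hc' : b' m = (1 - a m / amax) * c m := by simp only [hb']; ring
      have hz' : d' m = (1 - a m / amax) * z m := by simp only [hd']; ring
      have ht : 0 < 1 - a m / amax := by
        rw [hc'] at hpos
        rcases lt_or_ge 0 (1 - a m / amax) with h | h
        · exact h
        · exfalso; nlinarith [(hc m).1]
      rw [hc', hz', mul_div_mul_left _ _ ht.ne',
        Real.log_div (hc m).1.ne' (hz m).1.ne']
  have hlogsum := log_sum_ineq Finset.univ b' d' (fun m _ => hb'nonneg m)
    (fun m _ => hd'nonneg m) (fun m _ => hb'd' m)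
  rw [hsum_b', hsum_d'] at hlogsum
  rw [Finset.sum_congr rfl fun m _ => hterm m] at hlogsum
  -- binary inequality
  set p := Sc / amax with hp
  set q := Sz / amax with hq
  have hppos : 0 < p := by positivity
  have hqpos : 0 < q := by positivity
  have hple : p ≤ 1 := by rw [hp, div_le_one hamax]; exact hScle
  have hqle : q ≤ 1 := by rw [hq, div_le_one hamax]; exact hSzle
  have hlogScz : Real.log Sz - Real.log Sc = Real.log q - Real.log p := by
    have h1 : Real.log p = Real.log Sc - Real.log amax := by
      rw [hp, Real.log_div hScpos.ne' hamax.ne']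
    have h2 : Real.log q = Real.log Sz - Real.log amax := by
      rw [hq, Real.log_div hSzpos.ne' hamax.ne']
    rw [h1, h2]; ring
  have hkey : p * (Real.log q - Real.log p) ≤
      (1 - p) * Real.log ((1 - p) / (1 - q)) := by
    rcases eq_or_lt_of_le hple with hp1 | hp1
    · -- p = 1, show q = 1 as well
      have hSceq : Sc = amax := by
        rw [hp, div_eq_one_iff_eq hamax.ne'] at hp1
        exact hp1
      have hall : ∀ m, a m = amax := by
        intro m
        have h0 : ∑ j, (amax - a j) * c j = 0 := by
          have heq2 : ∑ j, (amax - a j) * c j = ∑ j, amax * c j - Sc := by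
            rw [hSc, ← Finset.sum_sub_distrib]
            exact Finset.sum_congr rfl fun j _ => by ring
          rw [heq2, ← Finset.mul_sum, hc1, mul_one, hSceq, sub_self]
        have h3 := (Finset.sum_eq_zero_iff_of_nonneg fun j _ =>
          mul_nonneg (sub_nonneg.2 (hamax_ub j)) (hc j).1.le).mp h0 m
          (Finset.mem_univ m)
        rcases mul_eq_zero.mp h3 with h | h
        · linarith [sub_eq_zero.mp h]
        · exact absurd h (hc m).1.ne'
      have hq1 : q = 1 := by
        have hSzeq : Sz = amax := by
          rw [hSz, Finset.sum_congr rfl fun j _ => by rw [hall j],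
            ← Finset.mul_sum, hz1, mul_one]
        rw [hq, hSzeq, div_self hamax.ne']
      rw [hp1, hq1]
      simp
    · -- p < 1; then q < 1 too
      have hq1 : q < 1 := by
        rcases eq_or_lt_of_le hqle with h | h
        · exfalso
          have hSzeq : Sz = amax := by
            rw [hq, div_eq_one_iff_eq hamax.ne'] at h
            exact h
          have hall : ∀ m, a m = amax := by
            intro m
            have h0 : ∑ j, (amax - a j) * z j = 0 := by
              have heq2 : ∑ j, (amax - a j) * z j = ∑ j, amax * z j - Sz := by
                rw [hSz, ← Finset.sum_sub_distrib]
                exact Finset.sum_congr rfl fun j _ => by ring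
              rw [heq2, ← Finset.mul_sum, hz1, mul_one, hSzeq, sub_self]
            have h3 := (Finset.sum_eq_zero_iff_of_nonneg fun j _ =>
              mul_nonneg (sub_nonneg.2 (hamax_ub j)) (hz j).1.le).mp h0 m
              (Finset.mem_univ m)
            rcases mul_eq_zero.mp h3 with h' | h'
            · linarith [sub_eq_zero.mp h']
            · exact absurd h' (hz m).1.ne'
          have hSceq : Sc = amax := by
            rw [hSc, Finset.sum_congr rfl fun j _ => by rw [hall j],
              ← Finset.mul_sum, hc1, mul_one]
          have : p = 1 := by rw [hp, hSceq, div_self hamax.ne']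
          linarith
        · exact h
      have h1p : 0 < 1 - p := by linarith
      have h1q : 0 < 1 - q := by linarith
      have hA : p * (Real.log q - Real.log p) ≤ q - p := by
        have hx : 0 < q / p := by positivity
        have hl := Real.log_le_sub_one_of_pos hx
        rw [Real.log_div hqpos.ne' hppos.ne'] at hl
        have h2 := mul_le_mul_of_nonneg_left hl hppos.le
        have h3 : p * (q / p - 1) = q - p := by
          rw [mul_sub, mul_one, mul_comm p (q / p), div_mul_cancel₀ _ hppos.ne']
        nlinarith
      have hB : (1 - p) * (Real.log (1 - q) - Real.log (1 - p)) ≤ p - q := by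
        have hx : 0 < (1 - q) / (1 - p) := by positivity
        have hl := Real.log_le_sub_one_of_pos hx
        rw [Real.log_div h1q.ne' h1p.ne'] at hl
        have h2 := mul_le_mul_of_nonneg_left hl h1p.le
        have h3 : (1 - p) * ((1 - q) / (1 - p) - 1) = p - q := by
          rw [mul_sub, mul_one, mul_comm (1 - p) ((1 - q) / (1 - p)),
            div_mul_cancel₀ _ h1p.ne']
          ring
        nlinarith
      rw [Real.log_div h1p.ne' h1q.ne']
      nlinarith
  have hfin : p * (Real.log Sz - Real.log Sc) ≤ ∑ m, b' m * L m := by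
    rw [hlogScz]
    exact hkey.trans hlogsum
  linarith [hsplit, hfin]
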